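/- Finite-sample gFWER(k) control of Holm-based intrinsic selection followed by augmentation (Theorem 1 instantiated with the Holm procedure): let m ≥ 1 be an integer, α ∈ (0,1), k ∈ ℕ, (Ω, F, P) a probability space, N ⊆ Fin m a set of null indices, and x : Ω → (Fin m → [0,1]) measurable p-values that are superuniform on the nulls, i.e., for every i ∈ N and every u ∈ [0,1], P({ω : x_i(ω) ≤ u}) ≤ u. Let S(ω) ⊆ Fin m be the set rejected by the Holm procedure at level α applied to x(ω), and let A : Ω → Finset (Fin m) be any measurable map with |A(ω)| ≤ k for every ω. Then P({ω : |(S(ω) ∪ A(ω)) ∩ N| ≥ k + 1}) ≤ α. -/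

import Mathlib

open MeasureTheory

/-- The Holm-adjusted p-value of index `i`: with `σ = Tuple.sort x` a rank-ordering of
the p-values `x` (so that `x ∘ σ` is nondecreasing) and `j = σ⁻¹ i` the rank of `i`,
the adjusted p-value is `max_{ℓ ≤ j} min ((m - ℓ) * x (σ ℓ)) 1` (with ranks `ℓ`
zero-based, so that `m - ℓ` is the paper's `m - ℓ + 1` for one-based ranks). -/
noncomputable def holmAdjusted {m : ℕ} (x : Fin m → ℝ) (i : Fin m) : ℝ :=
  Finset.sup' (Finset.Iic ((Tuple.sort x).symm i)) Finset.nonempty_Iic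
    (fun ℓ => min (((m - (ℓ : ℕ) : ℕ) : ℝ) * x (Tuple.sort x ℓ)) 1)

/-- The Holm procedure at level `α` rejects index `i` iff its Holm-adjusted p-value is
below `α`. -/
def holmReject {m : ℕ} (x : Fin m → ℝ) (α : ℝ) (i : Fin m) : Prop :=
  holmAdjusted x i < α

/-- The set of indices rejected by the Holm procedure at level `α`. -/
noncomputable def holmRejectSet {m : ℕ} (x : Fin m → ℝ) (α : ℝ) : Finset (Fin m) :=
  Finset.univ.filter (fun i => holmAdjusted x i < α)

lemma holm_key {m : ℕ} (v : Fin m → ℝ) {α : ℝ} (hα1 : α < 1) (hv : ∀ i, 0 ≤ v i)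
    (N : Finset (Fin m)) {i : Fin m} (hi : i ∈ N) (hr : holmReject v α i) :
    ∃ j ∈ N, (N.card : ℝ) * v j < α := by
  set σ := Tuple.sort v with hσ
  have hr' := (Finset.sup'_lt_iff Finset.nonempty_Iic).mp hr
  set T := (Finset.Iic (σ.symm i)).filter (fun ℓ => σ ℓ ∈ N) with hT
  have hTne : T.Nonempty := by
    refine ⟨σ.symm i, Finset.mem_filter.mpr ⟨Finset.mem_Iic.mpr le_rfl, ?_⟩⟩
    simpa using hi
  set ℓ0 := T.min' hTne with hℓ0
  have hℓ0T : ℓ0 ∈ T := T.min'_mem hTne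
  obtain ⟨hℓ0le, hℓ0N⟩ := Finset.mem_filter.mp hℓ0T
  have hℓ0le' : ℓ0 ≤ σ.symm i := Finset.mem_Iic.mp hℓ0le
  -- all earlier positions are non-null
  have hbefore : ∀ ℓ : Fin m, ℓ < ℓ0 → σ ℓ ∉ N := by
    intro ℓ hℓ hmem
    have : ℓ ∈ T := Finset.mem_filter.mpr ⟨Finset.mem_Iic.mpr (hℓ.le.trans hℓ0le'), hmem⟩
    exact absurd (T.min'_le ℓ this) (not_le.mpr hℓ)
  -- count: Iio ℓ0 injects into Nᶜ
  have hcard : (ℓ0 : ℕ) ≤ m - N.card := by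
    have himg : (Finset.Iio ℓ0).image σ ⊆ Nᶜ := by
      intro j hj
      obtain ⟨ℓ, hℓ, rfl⟩ := Finset.mem_image.mp hj
      exact Finset.mem_compl.mpr (hbefore ℓ (Finset.mem_Iio.mp hℓ))
    have h1 : ((Finset.Iio ℓ0).image σ).card = (ℓ0 : ℕ) := by
      rw [Finset.card_image_of_injective _ σ.injective, Fin.card_Iio]
    have h2 : (Nᶜ : Finset (Fin m)).card = m - N.card := by
      rw [Finset.card_compl, Fintype.card_fin]
    calc (ℓ0 : ℕ) = ((Finset.Iio ℓ0).image σ).card := h1.symm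
      _ ≤ (Nᶜ : Finset (Fin m)).card := Finset.card_le_card himg
      _ = m - N.card := h2
  have hn_le : N.card ≤ m - (ℓ0 : ℕ) := by
    have := N.card_le_univ
    simp only [Finset.card_univ, Fintype.card_fin] at this
    omega
  have hmin := hr' ℓ0 hℓ0le
  have hlt : ((m - (ℓ0 : ℕ) : ℕ) : ℝ) * v (σ ℓ0) < α := by
    rcases min_lt_iff.mp hmin with h | h
    · exact h
    · linarith
  refine ⟨σ ℓ0, hℓ0N, lt_of_le_of_lt ?_ hlt⟩
  exact mul_le_mul_of_nonneg_right (Nat.cast_le.mpr hn_le) (hv _)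

/-- Finite-sample gFWER(k) control of Holm-based intrinsic selection followed by
augmentation: if the p-values are superuniform on the null indices `N`, the set `S ω`
rejected by the Holm procedure at level `α` is augmented by any measurable set `A ω`
of at most `k` indices, then the probability that the augmented selection contains at
least `k + 1` null indices is at most `α`. -/
theorem holm_augmented_gfwer (m : ℕ) (hm : 1 ≤ m) (α : ℝ) (hα : α ∈ Set.Ioo (0 : ℝ) 1)
    (k : ℕ)
    {Ω : Type*} [MeasurableSpace Ω] (P : Measure Ω) [IsProbabilityMeasure P]
    (N : Finset (Fin m))
    (x : Ω → Fin m → ℝ) (hxmeas : Measurable x)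
    (hx01 : ∀ ω i, x ω i ∈ Set.Icc (0 : ℝ) 1)
    (hsuper : ∀ i ∈ N, ∀ u ∈ Set.Icc (0 : ℝ) 1,
      P {ω | x ω i ≤ u} ≤ ENNReal.ofReal u)
    (A : Ω → Finset (Fin m))
    (hA : @Measurable Ω (Finset (Fin m)) _ ⊤ A)
    (hAk : ∀ ω, (A ω).card ≤ k) :
    P {ω | k + 1 ≤ ((holmRejectSet (x ω) α ∪ A ω) ∩ N).card} ≤ ENNReal.ofReal α := by
  obtain ⟨hα0, hα1⟩ := hα
  rcases N.eq_empty_or_nonempty with hN | hN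
  · have : {ω | k + 1 ≤ ((holmRejectSet (x ω) α ∪ A ω) ∩ N).card} = ∅ := by
      ext ω; simp [hN]
    rw [this, measure_empty]
    exact zero_le
  · have hn : 1 ≤ N.card := Finset.card_pos.mpr hN
    have hnpos : (0 : ℝ) < N.card := by exact_mod_cast hn
    set u := α / N.card with hu_def
    have hu : u ∈ Set.Icc (0 : ℝ) 1 := by
      constructor
      · exact div_nonneg hα0.le (Nat.cast_nonneg _)
      · rw [div_le_one hnpos]
        have : (1 : ℝ) ≤ N.card := by exact_mod_cast hn
        linarith
    have hsub : {ω | k + 1 ≤ ((holmRejectSet (x ω) α ∪ A ω) ∩ N).card}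
        ⊆ ⋃ j ∈ N, {ω | x ω j ≤ u} := by
      intro ω hω
      simp only [Set.mem_setOf_eq] at hω
      have hdist : (holmRejectSet (x ω) α ∪ A ω) ∩ N
          = (holmRejectSet (x ω) α ∩ N) ∪ (A ω ∩ N) := Finset.union_inter_distrib_right _ _ _
      have hcardA : (A ω ∩ N).card ≤ k := le_trans (Finset.card_le_card (Finset.inter_subset_left)) (hAk ω)
      have hub : ((holmRejectSet (x ω) α ∪ A ω) ∩ N).card
          ≤ (holmRejectSet (x ω) α ∩ N).card + k := by
        rw [hdist]
        exact le_trans (Finset.card_union_le _ _) (by omega)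
      have h1 : 1 ≤ (holmRejectSet (x ω) α ∩ N).card := by omega
      obtain ⟨i, hi⟩ := Finset.card_pos.mp h1
      obtain ⟨hiS, hiN⟩ := Finset.mem_inter.mp hi
      have hrej : holmReject (x ω) α i := (Finset.mem_filter.mp hiS).2
      obtain ⟨j, hjN, hj⟩ := holm_key (x ω) hα1 (fun i => (hx01 ω i).1) N hiN hrej
      refine Set.mem_biUnion hjN ?_
      show x ω j ≤ u
      rw [hu_def, le_div_iff₀ hnpos]
      nlinarith [hj]
    calc P {ω | k + 1 ≤ ((holmRejectSet (x ω) α ∪ A ω) ∩ N).card}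
        ≤ P (⋃ j ∈ N, {ω | x ω j ≤ u}) := measure_mono hsub
      _ ≤ ∑ j ∈ N, P {ω | x ω j ≤ u} := measure_biUnion_finset_le N _
      _ ≤ ∑ _j ∈ N, ENNReal.ofReal u := Finset.sum_le_sum fun j hj => hsuper j hj u hu
      _ = N.card * ENNReal.ofReal u := by rw [Finset.sum_const, nsmul_eq_mul]
      _ = ENNReal.ofReal α := by
          rw [← ENNReal.ofReal_natCast, ← ENNReal.ofReal_mul (Nat.cast_nonneg _)]
          congr 1
          rw [hu_def, mul_comm, div_mul_cancel₀ _ hnpos.ne']
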